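/- Let c11, c22, c12 be the entries of a symmetric positive definite 2×2 integer matrix C. Define U ∈ ℤ^{(c11 + c22 − c12)×2} with rows: (1,0) repeated c11 − c12 times, (1,1) repeated c12 times, and (0,1) repeated c22 − c12 times (assuming c12 ≤ min(c11, c22), c12 ≥ 0). Then U^T U = C. Moreover, for any S ∈ GL(2,ℤ) with S^T C S = (c'_{ij}), one has c11 + c22 − c12 ≤ c'_{11} + c'_{22} − c'_{12}, i.e., the quantity c11 + c22 − c12 is minimal among all basic-set transforms when U exists. -/

import Mathlib

open Matrix

lemma sum_ind_aux (n a b : ℕ) (hab : a ≤ b) (hbn : b ≤ n) :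
    ∑ i ∈ Finset.range n, (if a ≤ i ∧ i < b then (1:ℤ) else 0) = (b : ℤ) - a := by
  rw [Finset.sum_boole]
  have h : (Finset.range n).filter (fun i => a ≤ i ∧ i < b) = Finset.Ico a b := by
    ext i; simp [Finset.mem_Ico]; omega
  rw [h, Nat.card_Ico]; omega

lemma sum_ind_fin (n a b : ℕ) (hab : a ≤ b) (hbn : b ≤ n) (F : Fin n → ℤ)
    (hF : ∀ x : Fin n, F x = if a ≤ (x:ℕ) ∧ (x:ℕ) < b then 1 else 0) :
    ∑ x : Fin n, F x = (b:ℤ) - a := by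
  have h := Fin.sum_univ_eq_sum_range (fun i : ℕ => if a ≤ i ∧ i < b then (1:ℤ) else 0) n
  rw [Finset.sum_congr rfl (fun x _ => hF x), h, sum_ind_aux n a b hab hbn]

lemma minimality_aux (n : ℕ) (C : Matrix (Fin 2) (Fin 2) ℤ)
    (U : Matrix (Fin n) (Fin 2) ℤ)
    (hUtU : Uᵀ * U = C)
    (hrows : ∀ i : Fin n, U i 0 ≠ 0 ∨ U i 1 ≠ 0)
    (S : Matrix (Fin 2) (Fin 2) ℤ) (hS : IsUnit S.det) :
    (n : ℤ) ≤ (Sᵀ * C * S) 0 0 + (Sᵀ * C * S) 1 1 - (Sᵀ * C * S) 0 1 := by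
  set V := U * S with hV
  have hC' : Sᵀ * C * S = Vᵀ * V := by
    rw [hV, Matrix.transpose_mul, ← hUtU]
    simp [Matrix.mul_assoc]
  have hrowV : ∀ i : Fin n, V i 0 ≠ 0 ∨ V i 1 ≠ 0 := by
    intro i
    by_contra h
    push_neg at h
    have hVS : V * S⁻¹ = U := by
      rw [hV, Matrix.mul_assoc, Matrix.mul_nonsing_inv S hS, Matrix.mul_one]
    have hU0 : ∀ j, U i j = 0 := by
      intro j
      rw [← hVS, Matrix.mul_apply, Fin.sum_univ_two, h.1, h.2]
      ring
    rcases hrows i with h0 | h0 <;> exact h0 (hU0 _)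
  have hterm : ∀ i : Fin n, (1:ℤ) ≤ V i 0 * V i 0 + V i 1 * V i 1 - V i 0 * V i 1 := by
    intro i
    rcases hrowV i with h0 | h0
    · have h1 : 1 ≤ V i 0 * V i 0 := by rcases h0.lt_or_gt with h | h <;> nlinarith
      nlinarith [sq_nonneg (V i 0 - 2 * V i 1)]
    · have h1 : 1 ≤ V i 1 * V i 1 := by rcases h0.lt_or_gt with h | h <;> nlinarith
      nlinarith [sq_nonneg (2 * V i 0 - V i 1)]
  have hsum : (Sᵀ * C * S) 0 0 + (Sᵀ * C * S) 1 1 - (Sᵀ * C * S) 0 1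
      = ∑ i : Fin n, (V i 0 * V i 0 + V i 1 * V i 1 - V i 0 * V i 1) := by
    rw [hC']
    simp only [Matrix.mul_apply, Matrix.transpose_apply]
    rw [← Finset.sum_add_distrib, ← Finset.sum_sub_distrib]
  rw [hsum]
  calc (n : ℤ) = ∑ _i : Fin n, (1:ℤ) := by simp
    _ ≤ _ := Finset.sum_le_sum (fun i _ => hterm i)

/-- For a symmetric positive definite matrix `C = ((c11, c12),(c12, c22))` with
`0 ≤ c12 ≤ min(c11, c22)`, the matrix `U` with rows `(1,0)` (`c11 − c12` times),
`(1,1)` (`c12` times) and `(0,1)` (`c22 − c12` times) satisfies `UᵀU = C`; moreover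
for any `S ∈ GL(2,ℤ)` with `SᵀCS = C'`, one has `c11 + c22 − c12 ≤ c'11 + c'22 − c'12`. -/
theorem two_by_two_minimality (c11 c22 c12 : ℕ) (h1 : c12 ≤ c11) (h2 : c12 ≤ c22)
    (C : Matrix (Fin 2) (Fin 2) ℤ)
    (hC : C = !![(c11 : ℤ), (c12 : ℤ); (c12 : ℤ), (c22 : ℤ)])
    (hpd : (C.map (fun z => (z : ℝ))).PosDef)
    (U : Matrix (Fin (c11 + c22 - c12)) (Fin 2) ℤ)
    (hU : U = Matrix.of fun (i : Fin (c11 + c22 - c12)) (j : Fin 2) =>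
      if (i : ℕ) < c11 - c12 then (if j = 0 then 1 else 0)
      else if (i : ℕ) < c11 then 1
      else (if j = 0 then 0 else 1)) :
    Uᵀ * U = C ∧
    ∀ S : Matrix (Fin 2) (Fin 2) ℤ, IsUnit S.det →
      ((c11 : ℤ) + c22 - c12) ≤
        (Sᵀ * C * S) 0 0 + (Sᵀ * C * S) 1 1 - (Sᵀ * C * S) 0 1 := by
  have hUtU : Uᵀ * U = C := by
    subst hC hU
    ext j k
    fin_cases j <;> fin_cases k <;> simp [Matrix.mul_apply]
    · exact (sum_ind_fin _ 0 c11 (by omega) (by omega) _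
        (fun x => by split_ifs <;> omega)).trans (by omega)
    · exact (sum_ind_fin _ (c11 - c12) c11 (by omega) (by omega) _
        (fun x => by split_ifs <;> omega)).trans (by omega)
    · exact (sum_ind_fin _ (c11 - c12) c11 (by omega) (by omega) _
        (fun x => by split_ifs <;> omega)).trans (by omega)
    · exact (sum_ind_fin _ (c11 - c12) (c11 + c22 - c12) (by omega) (le_refl _) _
        (fun x => by split_ifs <;> omega)).trans (by omega)
  refine ⟨hUtU, fun S hS => ?_⟩
  have hrows : ∀ i : Fin (c11 + c22 - c12), U i 0 ≠ 0 ∨ U i 1 ≠ 0 := by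
    intro i
    subst hU
    simp only [Matrix.of_apply]
    split_ifs <;> simp_all
  have h := minimality_aux (c11 + c22 - c12) C U hUtU hrows S hS
  have hcast : ((c11 + c22 - c12 : ℕ) : ℤ) = (c11 : ℤ) + c22 - c12 := by omega
  linarith [h, hcast.ge]
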